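/- arXiv:1306.6120 — 8 statements merged into one kernel-verified Lean document; each statement's English description precedes it below -/
import Mathlib

section
/- If T is a triangulation of the infinity-gon (a maximal set of pairwise non-crossing internal arcs) and n is a right-fountain of T (i.e., T contains infinitely many arcs of the form (n,p)), then T also has a left-fountain, i.e., there exists an integer m such that T contains infinitely many arcs of the form (q,m). -/
/-- An internal arc of the infinity-gon: a pair (m,n) of integers with n - m ≥ 2. -/
def IsArc (a : ℤ × ℤ) : Prop := a.1 + 2 ≤ a.2

/-- Two arcs (m,n) and (p,q) cross if m < p < n < q or p < m < q < n. -/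
def Cross (a b : ℤ × ℤ) : Prop :=
  (a.1 < b.1 ∧ b.1 < a.2 ∧ a.2 < b.2) ∨ (b.1 < a.1 ∧ a.1 < b.2 ∧ b.2 < a.2)

/-- A triangulation of the infinity-gon: a maximal set of pairwise non-crossing internal arcs. -/
def IsTriangulation (T : Set (ℤ × ℤ)) : Prop :=
  (∀ a ∈ T, IsArc a) ∧ (∀ a ∈ T, ∀ b ∈ T, ¬ Cross a b) ∧
    (∀ γ, IsArc γ → (∀ a ∈ T, ¬ Cross γ a) → γ ∈ T)

/-- n is a left-fountain of T: infinitely many arcs of T end at n. -/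
def LeftFountain (T : Set (ℤ × ℤ)) (n : ℤ) : Prop := {m : ℤ | (m, n) ∈ T}.Infinite

/-- n is a right-fountain of T: infinitely many arcs of T start at n. -/
def RightFountain (T : Set (ℤ × ℤ)) (n : ℤ) : Prop := {p : ℤ | (n, p) ∈ T}.Infinite

theorem stmt1 (T : Set (ℤ × ℤ)) (hT : IsTriangulation T) (n : ℤ)
    (hn : RightFountain T n) : ∃ m : ℤ, LeftFountain T m := by
  by_contra hno
  push_neg at hno
  obtain ⟨hArc, hNC, hMax⟩ := hT
  -- every vertex has only finitely many arcs ending at it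
  have hfin : ∀ m : ℤ, {c : ℤ | (c, m) ∈ T}.Finite := by
    intro m
    by_contra h
    exact hno m h
  -- arcs from n get arbitrarily long
  have hbig : ∀ b : ℤ, ∃ p, (n, p) ∈ T ∧ b < p := by
    intro b
    by_contra h
    push_neg at h
    apply hn
    apply Set.Finite.subset (Set.finite_Icc (n + 2) b)
    intro p hp
    exact ⟨hArc _ hp, h p hp⟩
  -- no arc of T strictly straddles n
  have hstr : ∀ e f : ℤ, (e, f) ∈ T → e < n → n < f → False := by
    intro e f hef he hf
    obtain ⟨p, hp, hpf⟩ := hbig f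
    exact hNC _ hef _ hp (Or.inl ⟨he, hf, hpf⟩)
  -- lower bound for arcs ending at n
  obtain ⟨b, hb⟩ := (hfin n).bddBelow
  set a : ℤ := min b (n - 3) - 1 with ha
  have hanotT : ∀ x : ℤ, x ≤ a → (x, n) ∉ T := by
    intro x hx hmem
    have := hb hmem
    omega
  -- any missing arc (x, n) must cross an arc of T lying left of n
  have hcross : ∀ x : ℤ, x + 2 ≤ n → (x, n) ∉ T →
      ∃ c d, (c, d) ∈ T ∧ c < x ∧ x < d ∧ d < n := by
    intro x hx hnotin
    by_contra h
    push_neg at h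
    apply hnotin
    refine hMax (x, n) hx ?_
    rintro ⟨e, f⟩ hef hc
    rcases hc with ⟨h1, h2, h3⟩ | ⟨h1, h2, h3⟩
    · exact hstr e f hef h2 h3
    · have := h e f hef h1 h2
      omega
  have hxa : a + 2 ≤ n := by omega
  obtain ⟨c0, d0, hc0d0, hc0, hd0, hd0n⟩ := hcross a hxa (hanotT a le_rfl)
  -- The set of right endpoints d ∈ (a, n) of arcs covering a
  set D : Set ℤ := {d : ℤ | a < d ∧ d < n ∧ ∃ c, c < a ∧ (c, d) ∈ T} with hD
  have hDfin : D.Finite :=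
    (Set.finite_Ioo a n).subset (fun d hd => ⟨hd.1, hd.2.1⟩)
  have hDne : hDfin.toFinset.Nonempty := by
    rw [Set.Finite.toFinset_nonempty]
    exact ⟨d0, hd0, hd0n, c0, hc0, hc0d0⟩
  set dstar : ℤ := hDfin.toFinset.max' hDne with hdstar
  have hdmem : dstar ∈ D := by
    have := hDfin.toFinset.max'_mem hDne
    rwa [Set.Finite.mem_toFinset] at this
  have hdmax : ∀ d ∈ D, d ≤ dstar := by
    intro d hd
    exact hDfin.toFinset.le_max' d ((Set.Finite.mem_toFinset _).mpr hd)
  obtain ⟨hadstar, hdstarn, c1, hc1a, hc1T⟩ := hdmem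
  -- minimal left endpoint of an arc ending at dstar
  have hSfin : {c : ℤ | (c, dstar) ∈ T}.Finite := hfin dstar
  have hSne : hSfin.toFinset.Nonempty := by
    rw [Set.Finite.toFinset_nonempty]
    exact ⟨c1, hc1T⟩
  set cstar : ℤ := hSfin.toFinset.min' hSne with hcstar
  have hcmem : (cstar, dstar) ∈ T := by
    have := hSfin.toFinset.min'_mem hSne
    rwa [Set.Finite.mem_toFinset] at this
  have hcmin : ∀ c : ℤ, (c, dstar) ∈ T → cstar ≤ c := by
    intro c hc
    exact hSfin.toFinset.min'_le c ((Set.Finite.mem_toFinset _).mpr hc)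
  have hca : cstar < a := lt_of_le_of_lt (hcmin c1 hc1T) hc1a
  -- the arc (cstar, n) is missing, so it crosses something
  have hcn : cstar + 2 ≤ n := by omega
  obtain ⟨e, f, hefT, he, hf, hfn⟩ := hcross cstar hcn (hanotT cstar (le_of_lt hca))
  -- (e, f) does not cross (cstar, dstar), so f ≥ dstar
  have hnc := hNC _ hcmem _ hefT
  have hfd : dstar ≤ f := by
    by_contra hfd
    exact hnc (Or.inr ⟨he, hf, by omega⟩)
  rcases eq_or_lt_of_le hfd with heq | hlt
  · -- f = dstar contradicts minimality of cstar
    subst heq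
    exact absurd (hcmin e hefT) (by omega)
  · -- f > dstar contradicts maximality of dstar
    have hfD : f ∈ D := ⟨by omega, hfn, e, by omega, hefT⟩
    have := hdmax f hfD
    omega
end

section
/- A triangulation T of the infinity-gon has at most one right-fountain and at most one left-fountain. -/
lemma exists_gt_of_infinite_bddBelow (S : Set ℤ) (a : ℤ) (hS : S.Infinite)
    (hb : ∀ x ∈ S, a ≤ x) (B : ℤ) : ∃ p ∈ S, B < p := by
  by_contra h
  push_neg at h
  exact hS ((Set.finite_Icc a B).subset (fun x hx => ⟨hb x hx, h x hx⟩))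

lemma exists_lt_of_infinite_bddAbove (S : Set ℤ) (a : ℤ) (hS : S.Infinite)
    (hb : ∀ x ∈ S, x ≤ a) (B : ℤ) : ∃ p ∈ S, p < B := by
  by_contra h
  push_neg at h
  exact hS ((Set.finite_Icc B a).subset (fun x hx => ⟨h x hx, hb x hx⟩))

theorem stmt2 (T : Set (ℤ × ℤ)) (hT : IsTriangulation T) :
    (∀ n m : ℤ, RightFountain T n → RightFountain T m → n = m) ∧
    (∀ n m : ℤ, LeftFountain T n → LeftFountain T m → n = m) := by
  obtain ⟨harc, hnc, -⟩ := hT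
  constructor
  · -- right fountains
    have key : ∀ n m : ℤ, n < m → RightFountain T n → RightFountain T m → False := by
      intro n m hlt hn hm
      obtain ⟨p, hp, hmp⟩ := exists_gt_of_infinite_bddBelow _ (n + 2) hn
        (fun x hx => harc _ hx) m
      obtain ⟨q, hq, hpq⟩ := exists_gt_of_infinite_bddBelow _ (m + 2) hm
        (fun x hx => harc _ hx) p
      exact hnc _ hp _ hq (Or.inl ⟨hlt, hmp, hpq⟩)
    intro n m hn hm
    rcases lt_trichotomy n m with h | h | h
    · exact absurd (key n m h hn hm) (by simp)
    · exact h
    · exact absurd (key m n h hm hn) (by simp)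
  · -- left fountains
    have key : ∀ n m : ℤ, n < m → LeftFountain T n → LeftFountain T m → False := by
      intro n m hlt hn hm
      obtain ⟨q, hq, hqn⟩ := exists_lt_of_infinite_bddAbove _ (m - 2) hm
        (fun x hx => by have := harc _ hx; simp only [IsArc] at this; omega) n
      obtain ⟨p, hp, hpq⟩ := exists_lt_of_infinite_bddAbove _ (n - 2) hn
        (fun x hx => by have := harc _ hx; simp only [IsArc] at this; omega) q
      exact hnc _ hp _ hq (Or.inl ⟨hpq, hqn, hlt⟩)
    intro n m hn hm
    rcases lt_trichotomy n m with h | h | h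
    · exact absurd (key n m h hn hm) (by simp)
    · exact h
    · exact absurd (key m n h hm hn) (by simp)
end

section
/- Let T be a locally finite triangulation of the infinity-gon (each integer is an endpoint of only finitely many arcs of T) and let γ be any internal arc. Then there exists an arc ζ = (s,t) in T (or a pair of integers s < t with infinitely many arcs of T contained in [s,t]) such that γ is contained in the interval [s,t], i.e., s ≤ m < n ≤ t where γ = (m,n). More precisely: for every internal arc γ = (m,n), a locally finite triangulation T contains an arc (s,t) with s ≤ m and n ≤ t. -/
/-- T is locally finite: each integer is an endpoint of only finitely many arcs of T. -/
def LocallyFinite' (T : Set (ℤ × ℤ)) : Prop :=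
  ∀ k : ℤ, {a ∈ T | a.1 = k ∨ a.2 = k}.Finite

/-- If for every `b > v` there is an arc `(c,d) ∈ T` with `v ≤ c < b < d`, then `v` is a
right-fountain, contradicting local finiteness. -/
lemma fountain_forcing (T : Set (ℤ × ℤ)) (hT : IsTriangulation T) (hlf : LocallyFinite' T)
    (v : ℤ) (H : ∀ b : ℤ, v < b → ∃ c d : ℤ, (c, d) ∈ T ∧ v ≤ c ∧ c < b ∧ b < d) : False := by
  set S : Set ℤ := {p : ℤ | (v, p) ∈ T} with hSdef
  have step : ∀ b : ℤ, v < b → ((v, b) ∈ T ∨ b = v + 1) → ∃ d, b < d ∧ (v, d) ∈ T := by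
    intro b hb hcase
    obtain ⟨c, d, hcd, hvc, hcb, hbd⟩ := H b hb
    have hc : c = v := by
      rcases hcase with h | h
      · by_contra hne
        have hvc' : v < c := lt_of_le_of_ne hvc (Ne.symm hne)
        exact hT.2.1 _ h _ hcd (Or.inl ⟨hvc', hcb, hbd⟩)
      · omega
    exact ⟨d, hbd, hc ▸ hcd⟩
  have hfin : S.Finite := by
    have hpre : ((fun p : ℤ => (v, p)) ⁻¹' {a ∈ T | a.1 = v ∨ a.2 = v}).Finite := by
      apply (hlf v).preimage
      intro a _ b _ h
      simpa using congrArg Prod.snd h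
    apply hpre.subset
    intro p hp
    exact ⟨hp, Or.inl rfl⟩
  have hne : S.Nonempty := by
    obtain ⟨d, _, hdT⟩ := step (v + 1) (by omega) (Or.inr rfl)
    exact ⟨d, hdT⟩
  obtain ⟨p, hp, hmax⟩ := hfin.exists_maximalFor id S hne
  have hvp : v < p := by
    have := hT.1 _ hp
    simp only [IsArc] at this
    omega
  obtain ⟨d, hpd, hdT⟩ := step p hvp (Or.inl hp)
  have := hmax (j := d) hdT (le_of_lt hpd)
  simp only [id] at this
  omega

/-- In a locally finite triangulation every arc is spanned by a strictly larger arc. -/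
lemma grow (T : Set (ℤ × ℤ)) (hT : IsTriangulation T) (hlf : LocallyFinite' T)
    {s t : ℤ} (hst : (s, t) ∈ T) :
    ∃ s' t' : ℤ, (s', t') ∈ T ∧ s' ≤ s ∧ t ≤ t' ∧ (s', t') ≠ (s, t) := by
  by_contra h
  push_neg at h
  have harc_st : IsArc (s, t) := hT.1 _ hst
  simp only [IsArc] at harc_st
  apply fountain_forcing T hT hlf t
  intro b hb
  have harc : IsArc (s, b) := by simp only [IsArc]; omega
  have hnot : (s, b) ∉ T := by
    intro hmem
    have := h s b hmem le_rfl (le_of_lt hb)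
    have : b = t := congrArg Prod.snd this
    omega
  have hcross : ∃ a ∈ T, Cross (s, b) a := by
    by_contra hc
    push_neg at hc
    exact hnot (hT.2.2 _ harc hc)
  obtain ⟨⟨c, d⟩, hcdT, hcr⟩ := hcross
  rcases hcr with ⟨h1, h2, h3⟩ | ⟨h1, h2, h3⟩
  · -- s < c, c < b, b < d ; noncrossing with (s,t) forces t ≤ c
    refine ⟨c, d, hcdT, ?_, h2, h3⟩
    by_contra hct
    push_neg at hct
    exact hT.2.1 _ hst _ hcdT (Or.inl ⟨h1, hct, by omega⟩)
  · -- c < s, s < d, d < b ; noncrossing with (s,t) forces t ≤ d, so (c,d) spans (s,t)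
    exfalso
    have htd : t ≤ d := by
      by_contra hdt
      push_neg at hdt
      exact hT.2.1 _ hst _ hcdT (Or.inr ⟨h1, h2, hdt⟩)
    have := h c d hcdT (le_of_lt h1) htd
    have : c = s := congrArg Prod.fst this
    omega

theorem stmt6 (T : Set (ℤ × ℤ)) (hT : IsTriangulation T) (hlf : LocallyFinite' T)
    (m n : ℤ) (hγ : IsArc (m, n)) :
    ∃ s t : ℤ, (s, t) ∈ T ∧ s ≤ m ∧ n ≤ t := by
  -- Step 1: there is an arc (s,t) ∈ T with s ≤ m < t.
  have L1 : ∃ s t : ℤ, (s, t) ∈ T ∧ s ≤ m ∧ m < t := by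
    by_contra h
    push_neg at h
    apply fountain_forcing T hT hlf (m + 1)
    intro b hb
    have harc : IsArc (m, b) := by simp only [IsArc]; omega
    have hnot : (m, b) ∉ T := by
      intro hmem
      have hbm : b ≤ m := h m b hmem le_rfl
      omega
    have hcross : ∃ a ∈ T, Cross (m, b) a := by
      by_contra hc
      push_neg at hc
      exact hnot (hT.2.2 _ harc hc)
    obtain ⟨⟨c, d⟩, hcdT, hcr⟩ := hcross
    rcases hcr with ⟨h1, h2, h3⟩ | ⟨h1, h2, h3⟩
    · exact ⟨c, d, hcdT, by omega, h2, h3⟩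
    · have := h c d hcdT (by omega)
      omega
  by_contra hcon
  push_neg at hcon
  -- hcon : ∀ s t, (s,t) ∈ T → s ≤ m → t < n
  set D : Set (ℤ × ℤ) := {a | a ∈ T ∧ a.1 ≤ m ∧ m < a.2} with hDdef
  have hDfin : D.Finite := by
    have hsub : D ⊆ ⋃ k ∈ (Finset.Ioo m n : Finset ℤ), {a ∈ T | a.1 = k ∨ a.2 = k} := by
      rintro ⟨a1, a2⟩ ⟨haT, ham, hat⟩
      have h2n : a2 < n := hcon a1 a2 haT ham
      simp only [Set.mem_iUnion]
      exact ⟨a2, by simp only [Finset.mem_Ioo]; omega, haT, Or.inr rfl⟩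
    exact (Set.Finite.biUnion (Finset.Ioo m n).finite_toSet (fun k _ => hlf k)).subset hsub
  have hDne : D.Nonempty := by
    obtain ⟨s0, t0, h0, hs0, ht0⟩ := L1
    exact ⟨(s0, t0), h0, hs0, ht0⟩
  obtain ⟨a, haD, hamax⟩ := hDfin.exists_maximalFor (fun a => a.2 - a.1) D hDne
  obtain ⟨haT, ham, hat⟩ := haD
  have haeta : (a.1, a.2) = a := rfl
  obtain ⟨s', t', h', hs', ht', hne⟩ := grow T hT hlf (haeta ▸ haT)
  have hD' : (s', t') ∈ D := ⟨h', by omega, by omega⟩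
  have heq := hamax (j := (s', t')) hD' (by simp only; omega)
  simp only at heq
  apply hne
  have hs'eq : s' = a.1 := by omega
  have ht'eq : t' = a.2 := by omega
  rw [hs'eq, ht'eq]
end

section
/- If a triangulation T of the infinity-gon is not locally finite, then T has a right-fountain or a left-fountain, i.e., there is an integer n such that infinitely many arcs of T share n as a common left endpoint or as a common right endpoint. -/
theorem stmt7 (T : Set (ℤ × ℤ)) (hT : IsTriangulation T) (h : ¬ LocallyFinite' T) :
    ∃ n : ℤ, RightFountain T n ∨ LeftFountain T n := by
  simp only [LocallyFinite', not_forall] at h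
  obtain ⟨k, hk⟩ := h
  rw [← Set.not_infinite, not_not] at hk
  have hsub : {a ∈ T | a.1 = k ∨ a.2 = k} ⊆
      {a ∈ T | a.1 = k} ∪ {a ∈ T | a.2 = k} := by
    rintro a ⟨ha, h1 | h2⟩
    · exact Or.inl ⟨ha, h1⟩
    · exact Or.inr ⟨ha, h2⟩
  have := hk.mono hsub
  rcases Set.infinite_union.mp this with hL | hR
  · refine ⟨k, Or.inl ?_⟩
    have himg : (Prod.snd '' {a ∈ T | a.1 = k}).Infinite :=
      hL.image (fun a ha b hb hab => by
        obtain ⟨_, ha1⟩ := ha; obtain ⟨_, hb1⟩ := hb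
        exact Prod.ext (ha1.trans hb1.symm) hab)
    refine himg.mono ?_
    rintro p ⟨a, ⟨haT, ha1⟩, rfl⟩
    show (k, a.2) ∈ T
    rwa [← ha1, Prod.mk.eta]
  · refine ⟨k, Or.inr ?_⟩
    have himg : (Prod.fst '' {a ∈ T | a.2 = k}).Infinite :=
      hR.image (fun a ha b hb hab => by
        obtain ⟨_, ha1⟩ := ha; obtain ⟨_, hb1⟩ := hb
        exact Prod.ext hab (ha1.trans hb1.symm))
    refine himg.mono ?_
    rintro m ⟨a, ⟨haT, ha1⟩, rfl⟩
    show (a.1, k) ∈ T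
    rwa [← ha1, Prod.mk.eta]
end

section
/- Let T be a triangulation of the infinity-gon with left-fountain m₀ and right-fountain n₀ where n₀ - m₀ ≥ 2. Then every arc of T other than (m₀,n₀) either has both endpoints ≤ m₀, or both endpoints ≥ n₀, or both endpoints in the interval [m₀, n₀]. -/
theorem stmt8 (T : Set (ℤ × ℤ)) (hT : IsTriangulation T) (m₀ n₀ : ℤ)
    (hl : LeftFountain T m₀) (hr : RightFountain T n₀) (h : m₀ + 2 ≤ n₀) :
    ∀ a ∈ T, a ≠ (m₀, n₀) →
      (a.1 ≤ m₀ ∧ a.2 ≤ m₀) ∨ (n₀ ≤ a.1 ∧ n₀ ≤ a.2) ∨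
      (m₀ ≤ a.1 ∧ a.1 ≤ n₀ ∧ m₀ ≤ a.2 ∧ a.2 ≤ n₀) := by
  obtain ⟨harc, hnc, -⟩ := hT
  intro a ha _
  obtain ⟨x, y⟩ := a
  have hxy : x + 2 ≤ y := harc _ ha
  -- pick m in the left fountain with m < x
  have hm : ∃ m, (m, m₀) ∈ T ∧ m < x := by
    by_contra hc
    push_neg at hc
    apply hl
    apply Set.Finite.subset (Set.finite_Icc x m₀)
    intro m hmT
    exact ⟨hc m hmT, by have := harc _ hmT; simp [IsArc] at this; omega⟩
  obtain ⟨m, hmT, hmx⟩ := hm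
  -- pick p in the right fountain with y < p
  have hp : ∃ p, (n₀, p) ∈ T ∧ y < p := by
    by_contra hc
    push_neg at hc
    apply hr
    apply Set.Finite.subset (Set.finite_Icc n₀ y)
    intro p hpT
    exact ⟨by have := harc _ hpT; simp [IsArc] at this; omega, hc p hpT⟩
  obtain ⟨p, hpT, hyp⟩ := hp
  have h1 := hnc _ ha _ hmT
  have h2 := hnc _ ha _ hpT
  simp only [Cross, not_or] at h1 h2
  omega
end

section
/- Let T be a triangulation of the infinity-gon with left-fountain m₀ and right-fountain n₀, n₀ - m₀ ≥ 2. Then the arc (m₀,n₀) is frozen: for every internal arc γ ≠ (m₀,n₀), the set (T \ {(m₀,n₀)}) ∪ {γ} is not a triangulation of the infinity-gon. -/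
lemma exists_lt_of_inf {S : Set ℤ} (hS : S.Infinite) (B : ℤ)
    (hB : ∀ x ∈ S, x ≤ B) (c : ℤ) : ∃ x ∈ S, x < c := by
  by_contra hc
  push_neg at hc
  exact hS ((Set.finite_Icc c B).subset fun x hx => Set.mem_Icc.2 ⟨hc x hx, hB x hx⟩)

lemma exists_gt_of_inf {S : Set ℤ} (hS : S.Infinite) (B : ℤ)
    (hB : ∀ x ∈ S, B ≤ x) (c : ℤ) : ∃ x ∈ S, c < x := by
  by_contra hc
  push_neg at hc
  exact hS ((Set.finite_Icc B c).subset fun x hx => Set.mem_Icc.2 ⟨hB x hx, hc x hx⟩)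

/-- In any pairwise non-crossing set containing both fountains at m₀, n₀,
    no member crosses the arc (m₀, n₀). -/
lemma no_cross (S : Set (ℤ × ℤ)) (hNC : ∀ a ∈ S, ∀ b ∈ S, ¬ Cross a b)
    (m₀ n₀ : ℤ)
    (hl : ∀ c : ℤ, ∃ m < c, (m, m₀) ∈ S) (hr : ∀ c : ℤ, ∃ p > c, (n₀, p) ∈ S)
    (a : ℤ × ℤ) (ha : a ∈ S) : ¬ Cross (m₀, n₀) a := by
  rintro (⟨h1, h2, h3⟩ | ⟨h1, h2, h3⟩)
  · obtain ⟨p, hpc, hp⟩ := hr a.2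
    exact hNC a ha (n₀, p) hp (Or.inl ⟨h2, h3, hpc⟩)
  · obtain ⟨m, hmc, hm⟩ := hl a.1
    exact hNC a ha (m, m₀) hm (Or.inr ⟨hmc, h1, h2⟩)

theorem stmt10 (T : Set (ℤ × ℤ)) (hT : IsTriangulation T) (m₀ n₀ : ℤ)
    (hl : LeftFountain T m₀) (hr : RightFountain T n₀) (h : m₀ + 2 ≤ n₀) :
    ∀ γ : ℤ × ℤ, IsArc γ → γ ≠ (m₀, n₀) →
      ¬ IsTriangulation ((T \ {(m₀, n₀)}) ∪ {γ}) := by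
  obtain ⟨hArc, hNC, hMax⟩ := hT
  have hlT : ∀ c : ℤ, ∃ m < c, (m, m₀) ∈ T := by
    intro c
    obtain ⟨m, hm, hmc⟩ := exists_lt_of_inf hl (m₀ - 2)
      (fun x hx => by have := hArc _ hx; simp only [IsArc] at this; omega) c
    exact ⟨m, hmc, hm⟩
  have hrT : ∀ c : ℤ, ∃ p > c, (n₀, p) ∈ T := by
    intro c
    obtain ⟨p, hp, hpc⟩ := exists_gt_of_inf hr (n₀ + 2)
      (fun x hx => by have := hArc _ hx; simp only [IsArc] at this; omega) c
    exact ⟨p, hpc, hp⟩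
  intro γ hγ hne hT'
  obtain ⟨hArc', hNC', hMax'⟩ := hT'
  set T' := (T \ {(m₀, n₀)}) ∪ {γ} with hT'def
  -- fountain arcs survive in T'
  have hlT' : ∀ c : ℤ, ∃ m < c, (m, m₀) ∈ T' := by
    intro c
    obtain ⟨m, hmc, hm⟩ := hlT c
    exact ⟨m, hmc, Or.inl ⟨hm, by simp; omega⟩⟩
  have hrT' : ∀ c : ℤ, ∃ p > c, (n₀, p) ∈ T' := by
    intro c
    obtain ⟨p, hpc, hp⟩ := hrT c
    exact ⟨p, hpc, Or.inl ⟨hp, by simp; omega⟩⟩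
  have hmemT' : (m₀, n₀) ∈ T' :=
    hMax' (m₀, n₀) h (no_cross T' hNC' m₀ n₀ hlT' hrT')
  rcases hmemT' with ⟨_, hns⟩ | hg
  · exact hns rfl
  · exact hne (by simpa using hg.symm)
end

section
/- Any triangulation of the infinity-gon has at most one frozen arc. -/
/-- An arc τ of a triangulation T is frozen if no other internal arc γ gives a
triangulation (T \ {τ}) ∪ {γ}. -/
def IsFrozen (T : Set (ℤ × ℤ)) (τ : ℤ × ℤ) : Prop :=
  τ ∈ T ∧ ¬ ∃ γ : ℤ × ℤ, IsArc γ ∧ γ ≠ τ ∧ IsTriangulation ((T \ {τ}) ∪ {γ})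

namespace Stmt11Aux

lemma cross_def {a b c d : ℤ} :
    Cross (a,b) (c,d) ↔ ((a < c ∧ c < b ∧ b < d) ∨ (c < a ∧ a < d ∧ d < b)) := Iff.rfl

lemma arc_def {a b : ℤ} : IsArc (a,b) ↔ a + 2 ≤ b := Iff.rfl

/-- the reflection (m,n) ↦ (-n,-m) -/
def e (a : ℤ × ℤ) : ℤ × ℤ := (-a.2, -a.1)

lemma e_e (a : ℤ × ℤ) : e (e a) = a := by simp [e]

lemma e_inj : Function.Injective e := by
  intro a b h
  simp only [e, Prod.ext_iff] at h
  exact Prod.ext (by omega) (by omega)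

lemma isArc_e {a : ℤ × ℤ} : IsArc (e a) ↔ IsArc a := by
  simp only [IsArc, e]; omega

lemma cross_e {a b : ℤ × ℤ} : Cross (e a) (e b) ↔ Cross a b := by
  simp only [Cross, e]; omega

lemma tri_e {T : Set (ℤ × ℤ)} (hT : IsTriangulation T) : IsTriangulation (e '' T) := by
  refine ⟨?_, ?_, ?_⟩
  · rintro _ ⟨b, hb, rfl⟩
    exact isArc_e.mpr (hT.1 b hb)
  · rintro _ ⟨b, hb, rfl⟩ _ ⟨c, hc, rfl⟩
    rw [cross_e]
    exact hT.2.1 b hb c hc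
  · intro γ hγ hnc
    have hmem : e γ ∈ T := by
      apply hT.2.2 (e γ) (isArc_e.mpr hγ)
      intro a ha hc
      apply hnc (e a) ⟨a, ha, rfl⟩
      rw [← cross_e (a := γ) (b := e a), e_e]
      exact hc
    exact ⟨e γ, hmem, e_e γ⟩

lemma frozen_e {T : Set (ℤ × ℤ)} {τ : ℤ × ℤ} (h : IsFrozen T τ) :
    IsFrozen (e '' T) (e τ) := by
  refine ⟨⟨τ, h.1, rfl⟩, ?_⟩
  rintro ⟨γ, hγa, hγne, hγT⟩
  apply h.2
  refine ⟨e γ, isArc_e.mpr ?_, ?_, ?_⟩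
  · -- IsArc γ; isArc_e instantiated at (e γ)?  fix below
    exact hγa
  · intro hh
    exact hγne (by rw [← hh, e_e])
  · have himg : e '' ((e '' T \ {e τ}) ∪ {γ}) = (T \ {τ}) ∪ {e γ} := by
      rw [Set.image_union, Set.image_diff e_inj, Set.image_singleton, Set.image_singleton,
        e_e, ← Set.image_comp]
      simp [Function.comp_def, e_e]
    have := tri_e hγT
    rwa [himg] at this

/-- Inside every arc of a triangulation there is an adjacent triangle. -/
lemma inside_vertex {T : Set (ℤ × ℤ)} (hT : IsTriangulation T) {m n : ℤ} (hmn : (m,n) ∈ T) :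
    ∃ a, m < a ∧ a < n ∧ ((m,a) ∈ T ∨ a = m+1) ∧ ((a,n) ∈ T ∨ a = n-1) := by
  classical
  have harc : m + 2 ≤ n := hT.1 _ hmn
  obtain ⟨a, ⟨⟨ha1, ha2⟩, ha3⟩, hmax⟩ := Int.exists_greatest_of_bdd
      (P := fun a => (m < a ∧ a < n) ∧ ((m,a) ∈ T ∨ a = m+1))
      ⟨n - 1, fun z hz => by omega⟩ ⟨m + 1, ⟨by omega, by omega⟩, Or.inr rfl⟩
  by_cases han : a = n - 1
  · exact ⟨a, ha1, ha2, ha3, Or.inr han⟩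
  refine ⟨a, ha1, ha2, ha3, Or.inl (hT.2.2 (a,n) (by rw [arc_def]; omega) ?_)⟩
  rintro ⟨p,q⟩ hb hc
  rw [cross_def] at hc
  have hbτ := hT.2.1 _ hb _ hmn; rw [cross_def] at hbτ
  rcases hc with ⟨h1,h2,h3⟩|⟨h1,h2,h3⟩
  · omega
  · rcases lt_trichotomy p m with hp|hp|hp
    · omega
    · subst hp
      have := hmax q ⟨⟨by omega, by omega⟩, Or.inl hb⟩
      omega
    · rcases ha3 with h|h
      · have := hT.2.1 _ hb _ h; rw [cross_def] at this; omega
      · omega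

/-- The flip: given the inside triangle vertex a and an outside triangle vertex v < m,
the arc (v,a) replaces (m,n). -/
lemma flip_left {T : Set (ℤ × ℤ)} (hT : IsTriangulation T) {m n a v : ℤ} (hmn : (m,n) ∈ T)
    (ham : m < a) (han : a < n) (ha1 : (m,a) ∈ T ∨ a = m+1) (ha2 : (a,n) ∈ T ∨ a = n-1)
    (hvm : v < m) (hv1 : (v,m) ∈ T ∨ v = m-1) (hv2 : (v,n) ∈ T) :
    ∃ γ : ℤ × ℤ, IsArc γ ∧ γ ≠ (m,n) ∧ IsTriangulation ((T \ {(m,n)}) ∪ {γ}) := by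
  have noc : ∀ p q, (p,q) ∈ T → (p,q) ≠ (m,n) → ¬ Cross (v,a) (p,q) := by
    intro p q hb hbne hc
    rw [cross_def] at hc
    have hbτ := hT.2.1 _ hb _ hmn; rw [cross_def] at hbτ
    have hbvn := hT.2.1 _ hb _ hv2; rw [cross_def] at hbvn
    rcases hc with ⟨h1,h2,h3⟩|⟨h1,h2,h3⟩
    · rcases lt_trichotomy p m with hp|hp|hp
      · rcases hv1 with h|h
        · have := hT.2.1 _ hb _ h; rw [cross_def] at this; omega
        · omega
      · subst hp
        rcases lt_trichotomy q n with hq|hq|hq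
        · rcases ha2 with h|h
          · have := hT.2.1 _ hb _ h; rw [cross_def] at this; omega
          · omega
        · exact hbne (by rw [hq])
        · omega
      · rcases ha1 with h|h
        · have := hT.2.1 _ hb _ h; rw [cross_def] at this; omega
        · omega
    · rcases lt_trichotomy q m with hq|hq|hq
      · rcases hv1 with h|h
        · have := hT.2.1 _ hb _ h; rw [cross_def] at this; omega
        · omega
      · omega
      · omega
  refine ⟨(v,a), by rw [arc_def]; omega, by simp [Prod.ext_iff]; omega, ?_, ?_, ?_⟩
  · rintro b (⟨hb, -⟩ | hb)
    · exact hT.1 _ hb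
    · rw [Set.mem_singleton_iff] at hb; subst hb; rw [arc_def]; omega
  · rintro b hbm c hcm
    rcases hbm with ⟨hb, hbne⟩ | hb <;> rcases hcm with ⟨hc, hcne⟩ | hc
    · exact hT.2.1 _ hb _ hc
    · rw [Set.mem_singleton_iff] at hc; subst hc
      obtain ⟨p, q⟩ := b
      simp only [Set.mem_singleton_iff] at hbne
      intro hcr
      exact noc p q hb hbne (by rw [cross_def] at hcr ⊢; omega)
    · rw [Set.mem_singleton_iff] at hb; subst hb
      obtain ⟨p, q⟩ := c
      simp only [Set.mem_singleton_iff] at hcne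
      exact noc p q hc hcne
    · rw [Set.mem_singleton_iff] at hb hc; subst hb; subst hc
      rw [cross_def]; omega
  · intro δ hδa hδnc
    obtain ⟨x, y⟩ := δ
    have harc : x + 2 ≤ y := hδa
    by_cases hcτ : Cross (x,y) (m,n)
    · -- must equal (v,a)
      have hγnc := hδnc (v,a) (Or.inr rfl)
      rw [cross_def] at hγnc hcτ
      have hvn := hδnc (v,n) (Or.inl ⟨hv2, by simp [Prod.ext_iff]; omega⟩)
      rw [cross_def] at hvn
      rcases hcτ with ⟨h1,h2,h3⟩|⟨h1,h2,h3⟩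
      rotate_left
      · omega
      · rcases lt_trichotomy x v with hx|hx|hx
        · omega
        · subst hx
          rcases lt_trichotomy y a with hy|hy|hy
          · rcases ha1 with h|h
            · have := hδnc (m,a) (Or.inl ⟨h, by simp [Prod.ext_iff]; omega⟩)
              rw [cross_def] at this; omega
            · omega
          · rw [hy]; exact Or.inr rfl
          · rcases ha2 with h|h
            · have := hδnc (a,n) (Or.inl ⟨h, by simp [Prod.ext_iff]; omega⟩)
              rw [cross_def] at this; omega
            · omega
        · rcases hv1 with h|h
          · have := hδnc (v,m) (Or.inl ⟨h, by simp [Prod.ext_iff]; omega⟩)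
            rw [cross_def] at this; omega
          · omega
    · have hδT : (x,y) ∈ T := by
        apply hT.2.2 _ hδa
        intro b hb
        by_cases hbτ : b = (m,n)
        · rw [hbτ]; exact hcτ
        · exact hδnc b (Or.inl ⟨hb, by simp [Set.mem_singleton_iff]; exact hbτ⟩)
      have hδτ : (x,y) ≠ (m,n) := by
        intro h
        apply hδnc (v,a) (Or.inr rfl)
        rw [h, cross_def]; omega
      exact Or.inl ⟨hδT, by simp only [Set.mem_singleton_iff]; exact hδτ⟩

/-- A frozen arc (m,n) admits no arc (p,n) of T with p < m. -/
lemma no_left_arc {T : Set (ℤ × ℤ)} (hT : IsTriangulation T) {m n : ℤ}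
    (hf : IsFrozen T (m,n)) : ∀ p, p < m → (p,n) ∉ T := by
  classical
  have hmn : (m,n) ∈ T := hf.1
  have harc : m + 2 ≤ n := hT.1 _ hmn
  obtain ⟨a, ham, han, ha1, ha2⟩ := inside_vertex hT hmn
  by_contra h
  push_neg at h
  obtain ⟨p₁, hp₁, hp₁T⟩ := h
  obtain ⟨p0, ⟨hp0m, hp0T⟩, hmax⟩ := Int.exists_greatest_of_bdd
    (P := fun p => p < m ∧ (p,n) ∈ T) ⟨m, fun z hz => le_of_lt hz.1⟩ ⟨p₁, hp₁, hp₁T⟩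
  have key : (p0, m) ∈ T ∨ p0 = m - 1 := by
    by_cases hpe : p0 = m - 1
    · exact Or.inr hpe
    left
    apply hT.2.2 _ (by rw [arc_def]; omega)
    rintro ⟨p,q⟩ hb hc
    rw [cross_def] at hc
    have hbτ := hT.2.1 _ hb _ hmn; rw [cross_def] at hbτ
    have hbp := hT.2.1 _ hb _ hp0T; rw [cross_def] at hbp
    rcases hc with ⟨h1,h2,h3⟩|⟨h1,h2,h3⟩
    · rcases lt_trichotomy q n with hq|hq|hq
      · omega
      · have := hmax p ⟨by omega, by rwa [hq] at hb⟩; omega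
      · omega
    · omega
  exact hf.2 (flip_left hT hmn ham han ha1 ha2 hp0m key hp0T)

/-- A frozen arc (m,n) admits no arc (m,q) of T with n < q. -/
lemma no_right_arc {T : Set (ℤ × ℤ)} (hT : IsTriangulation T) {m n : ℤ}
    (hf : IsFrozen T (m,n)) : ∀ q, n < q → (m,q) ∉ T := by
  intro q hq hqT
  have hf' : IsFrozen (e '' T) (-n, -m) := frozen_e hf
  exact no_left_arc (tri_e hT) hf' (-q) (by omega) ⟨(m,q), hqT, rfl⟩

/-- A frozen arc (m,n) admits no covering arc. -/
lemma no_cover {T : Set (ℤ × ℤ)} (hT : IsTriangulation T) {m n : ℤ}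
    (hf : IsFrozen T (m,n)) : ∀ p q, p < m → n < q → (p,q) ∉ T := by
  classical
  have hmn : (m,n) ∈ T := hf.1
  have harc : m + 2 ≤ n := hT.1 _ hmn
  by_contra h
  push_neg at h
  obtain ⟨p₁, q₁, hp₁, hq₁, hT₁⟩ := h
  obtain ⟨ps, ⟨hpsm, qs₀, hqs₀n, hqs₀T⟩, hpmax⟩ := Int.exists_greatest_of_bdd
    (P := fun p => p < m ∧ ∃ q, n < q ∧ (p,q) ∈ T)
    ⟨m, fun z hz => le_of_lt hz.1⟩ ⟨p₁, hp₁, q₁, hq₁, hT₁⟩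
  obtain ⟨qs, ⟨hqsn, hqsT⟩, hqmin⟩ := Int.exists_least_of_bdd
    (P := fun q => n < q ∧ (ps,q) ∈ T) ⟨n, fun z hz => le_of_lt hz.1⟩ ⟨qs₀, hqs₀n, hqs₀T⟩
  obtain ⟨vs, ⟨hvs1, hvs2, hvs3⟩, hvmin⟩ := Int.exists_least_of_bdd
    (P := fun v => ps ≤ v ∧ v ≤ m-1 ∧ ((v,m) ∈ T ∨ v = m-1)) ⟨ps, fun z hz => hz.1⟩
    ⟨m-1, by omega, le_refl _, Or.inr rfl⟩
  have hvsn : (vs, n) ∈ T := by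
    apply hT.2.2 _ (by rw [arc_def]; omega)
    rintro ⟨p,q⟩ hb hc
    rw [cross_def] at hc
    have hbτ := hT.2.1 _ hb _ hmn; rw [cross_def] at hbτ
    have hbK := hT.2.1 _ hb _ hqsT; rw [cross_def] at hbK
    rcases hc with ⟨h1,h2,h3⟩|⟨h1,h2,h3⟩
    · rcases lt_trichotomy p m with hp|hp|hp
      · have := hpmax p ⟨hp, q, h3, hb⟩; omega
      · exact no_right_arc hT hf q h3 (by rwa [hp] at hb)
      · omega
    · rcases lt_trichotomy q m with hq|hq|hq
      · rcases hvs3 with hh|hh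
        · have := hT.2.1 _ hb _ hh; rw [cross_def] at this; omega
        · omega
      · have := hvmin p ⟨by omega, by omega, Or.inl (by rwa [hq] at hb)⟩; omega
      · omega
  exact no_left_arc hT hf vs (by omega) hvsn

/-- For a frozen arc (m,n), every x < m lies under an arc of T ending at or before m. -/
lemma step {T : Set (ℤ × ℤ)} (hT : IsTriangulation T) {m n : ℤ}
    (hf : IsFrozen T (m,n)) : ∀ x, x < m → ∃ p q, (p,q) ∈ T ∧ p < x ∧ x < q ∧ q ≤ m := by
  intro x hx
  have hmn : (m,n) ∈ T := hf.1
  have harc : m + 2 ≤ n := hT.1 _ hmn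
  have hxn : (x,n) ∉ T := no_left_arc hT hf x hx
  have hcr : ¬ ∀ b ∈ T, ¬ Cross (x,n) b :=
    fun hc => hxn (hT.2.2 _ (by rw [arc_def]; omega) hc)
  push_neg at hcr
  obtain ⟨⟨p,q⟩, hb, hc⟩ := hcr
  rw [cross_def] at hc
  have hbτ := hT.2.1 _ hb _ hmn; rw [cross_def] at hbτ
  rcases hc with ⟨h1,h2,h3⟩|⟨h1,h2,h3⟩
  · rcases lt_trichotomy p m with hp|hp|hp
    · exact absurd hb (no_cover hT hf p q hp h3)
    · exact absurd (by rwa [hp] at hb) (no_right_arc hT hf q h3)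
    · omega
  · rcases le_or_gt q m with hq|hq
    · exact ⟨p, q, hb, h1, h2, hq⟩
    · omega

/-- A frozen arc has a left fountain at its left endpoint. -/
lemma lf_of_frozen {T : Set (ℤ × ℤ)} (hT : IsTriangulation T) {m n : ℤ}
    (hf : IsFrozen T (m,n)) : LeftFountain T m := by
  classical
  have key : ∀ x, x < m → ∃ p, p < x ∧ (p,m) ∈ T := by
    intro x hx
    obtain ⟨p, qq, hpq, h1, h2, h3⟩ := step hT hf x hx
    obtain ⟨qb, ⟨pb, hpbT, hpbx, hqbx, hqbm⟩, hqmax⟩ := Int.exists_greatest_of_bdd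
      (P := fun q => ∃ p, (p,q) ∈ T ∧ p < x ∧ x < q ∧ q ≤ m) ⟨m, fun z hz => hz.choose_spec.2.2.2⟩
      ⟨qq, p, hpq, h1, h2, h3⟩
    rcases eq_or_lt_of_le hqbm with hqm|hqm
    · exact ⟨pb, hpbx, by rwa [hqm] at hpbT⟩
    exfalso
    obtain ⟨p', q', hp'q', h1', h2', h3'⟩ := step hT hf qb hqm
    have hnc := hT.2.1 _ hp'q' _ hpbT; rw [cross_def] at hnc
    have := hqmax q' ⟨p', hp'q', by omega, by omega, h3'⟩
    omega
  apply Set.infinite_of_not_bddBelow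
  rintro ⟨b, hb⟩
  obtain ⟨p, hp1, hp2⟩ := key (min b m - 1) (by
    have := min_le_right b m; omega)
  have hbp : b ≤ p := hb hp2
  have := min_le_left b m
  omega

/-- A frozen arc has a right fountain at its right endpoint. -/
lemma rf_of_frozen {T : Set (ℤ × ℤ)} (hT : IsTriangulation T) {m n : ℤ}
    (hf : IsFrozen T (m,n)) : RightFountain T n := by
  have hf' : IsFrozen (e '' T) (-n, -m) := frozen_e hf
  have h := lf_of_frozen (tri_e hT) hf'
  have hset : {p : ℤ | (p, -n) ∈ e '' T} = Neg.neg '' {q : ℤ | (n,q) ∈ T} := by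
    ext p
    constructor
    · rintro ⟨⟨a1, a2⟩, ha, heq⟩
      simp only [e, Prod.ext_iff] at heq
      refine ⟨a2, ?_, by omega⟩
      show (n, a2) ∈ T
      rwa [show a1 = n by omega] at ha
    · rintro ⟨q, hq, rfl⟩
      exact ⟨(n,q), hq, by simp [e]⟩
  have h' : (Neg.neg '' {q : ℤ | (n,q) ∈ T}).Infinite := by
    rw [← hset]; exact h
  exact Set.Infinite.of_image _ h'

lemma lf_unique {T : Set (ℤ × ℤ)} (hT : IsTriangulation T) {n1 n2 : ℤ}
    (h1 : LeftFountain T n1) (h2 : LeftFountain T n2) : n1 = n2 := by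
  by_contra hne
  wlog hlt : n1 < n2 generalizing n1 n2
  · exact this h2 h1 (Ne.symm hne) (by omega)
  have h2' : ∃ m', m' < n1 ∧ (m', n2) ∈ T := by
    by_contra hc; push_neg at hc
    refine absurd h2 (Set.not_infinite.mpr (Set.Finite.subset (Set.finite_Icc n1 (n2-2)) ?_))
    intro p hp
    have hp' : (p, n2) ∈ T := hp
    have harc : p + 2 ≤ n2 := hT.1 _ hp'
    have hge : ¬ p < n1 := fun hl => hc p hl hp' 
    simp only [Set.mem_Icc]
    omega
  obtain ⟨m', hm', hm'T⟩ := h2'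
  have h1' : ∃ mm, mm < m' ∧ (mm, n1) ∈ T := by
    by_contra hc; push_neg at hc
    refine absurd h1 (Set.not_infinite.mpr (Set.Finite.subset (Set.finite_Icc m' (n1-2)) ?_))
    intro p hp
    have hp' : (p, n1) ∈ T := hp
    have harc : p + 2 ≤ n1 := hT.1 _ hp'
    have hge : ¬ p < m' := fun hl => hc p hl hp' 
    simp only [Set.mem_Icc]
    omega
  obtain ⟨mm, hmm, hmmT⟩ := h1'
  exact hT.2.1 _ hmmT _ hm'T (by rw [cross_def]; omega)

lemma rf_unique {T : Set (ℤ × ℤ)} (hT : IsTriangulation T) {m1 m2 : ℤ}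
    (h1 : RightFountain T m1) (h2 : RightFountain T m2) : m1 = m2 := by
  by_contra hne
  wlog hlt : m1 < m2 generalizing m1 m2
  · exact this h2 h1 (Ne.symm hne) (by omega)
  have h1' : ∃ q, m2 < q ∧ (m1, q) ∈ T := by
    by_contra hc; push_neg at hc
    refine absurd h1 (Set.not_infinite.mpr (Set.Finite.subset (Set.finite_Icc (m1+2) m2) ?_))
    intro p hp
    have hp' : (m1, p) ∈ T := hp
    have harc : m1 + 2 ≤ p := hT.1 _ hp'
    have hge : ¬ m2 < p := fun hl => hc p hl hp' 
    simp only [Set.mem_Icc]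
    omega
  obtain ⟨q, hq, hqT⟩ := h1'
  have h2' : ∃ q', q < q' ∧ (m2, q') ∈ T := by
    by_contra hc; push_neg at hc
    refine absurd h2 (Set.not_infinite.mpr (Set.Finite.subset (Set.finite_Icc (m2+2) q) ?_))
    intro p hp
    have hp' : (m2, p) ∈ T := hp
    have harc : m2 + 2 ≤ p := hT.1 _ hp'
    have hge : ¬ q < p := fun hl => hc p hl hp' 
    simp only [Set.mem_Icc]
    omega
  obtain ⟨q', hq', hq'T⟩ := h2'
  exact hT.2.1 _ hqT _ hq'T (by rw [cross_def]; omega)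

end Stmt11Aux

open Stmt11Aux in
theorem stmt11 (T : Set (ℤ × ℤ)) (hT : IsTriangulation T) :
    ∀ τ τ' : ℤ × ℤ, IsFrozen T τ → IsFrozen T τ' → τ = τ' := by
  rintro ⟨m,n⟩ ⟨m',n'⟩ h h'
  have e1 := lf_unique hT (lf_of_frozen hT h) (lf_of_frozen hT h')
  have e2 := rf_unique hT (rf_of_frozen hT h) (rf_of_frozen hT h')
  rw [Prod.ext_iff]
  exact ⟨e1, e2⟩
end

section
/- Let T be a triangulation of the infinity-gon with a fountain at vertex a (i.e., a is both a left-fountain and a right-fountain). Then for every integer N > 0 there exist arcs (m, a) ∈ T with m < a - N and arcs (a, n) ∈ T with n > a + N; moreover, no arc (p,q) ∈ T satisfies p < a < q except possibly arcs incident to a itself — formally, every arc (p,q) ∈ T with p < a < q does not exist (any arc of T either has both endpoints ≤ a or both endpoints ≥ a). -/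
theorem stmt18 (T : Set (ℤ × ℤ)) (hT : IsTriangulation T) (a : ℤ)
    (hl : LeftFountain T a) (hr : RightFountain T a) :
    (∀ N : ℤ, 0 < N → (∃ m, (m, a) ∈ T ∧ m < a - N) ∧ (∃ n, (a, n) ∈ T ∧ a + N < n)) ∧
    (∀ b ∈ T, ¬ (b.1 < a ∧ a < b.2)) := by
  obtain ⟨harc, hnc, _⟩ := hT
  -- infinite set bounded above is unbounded below, and dually
  have hbelow : ∀ B : ℤ, ∃ m, (m, a) ∈ T ∧ m < B := by
    intro B
    by_contra h
    push_neg at h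
    apply hl
    apply Set.Finite.subset (Set.finite_Icc B (a - 2))
    intro x hx
    refine ⟨h x hx, ?_⟩
    have := harc _ hx
    simp only [IsArc] at this
    omega
  have habove : ∀ B : ℤ, ∃ n, (a, n) ∈ T ∧ B < n := by
    intro B
    by_contra h
    push_neg at h
    apply hr
    apply Set.Finite.subset (Set.finite_Icc (a + 2) B)
    intro x hx
    refine ⟨?_, h x hx⟩
    have := harc _ hx
    simp only [IsArc] at this
    omega
  refine ⟨fun N _ => ⟨?_, ?_⟩, ?_⟩
  · obtain ⟨m, hm, hm'⟩ := hbelow (a - N); exact ⟨m, hm, hm'⟩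
  · obtain ⟨n, hn, hn'⟩ := habove (a + N); exact ⟨n, hn, hn'⟩
  · rintro ⟨p, q⟩ hb ⟨hp, hq⟩
    obtain ⟨m, hm, hm'⟩ := hbelow p
    exact hnc _ hm _ hb (Or.inl ⟨hm', hp, hq⟩)
end
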